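/- For every t ∈ (0,T), the function x ↦ V(t,x) is not twice differentiable at the switching point x*(t) := −g₁(t)e^{−r(T−t)}: its second derivative from the right at x*(t) equals e^{2r(T−t)} while its second derivative from the left equals e^{(2A₁+2r)(T−t)}, and these differ since A₁ < 0. -/

import Mathlib

open Real Set

set_option maxHeartbeats 1000000

/-- for t ∈ (0,T), x ↦ V(t,x) is not twice differentiable at the
switching point x*(t) = −g₁(t)e^{−r(T−t)}: the right second derivative there is
e^{2r(T−t)} while the left second derivative is e^{(2A₁+2r)(T−t)}, and these
differ since A₁ < 0. -/
theorem stmt_8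
    (T r μ σ a b η θ d γ : ℝ)
    (hT : 0 < T) (hr : 0 < r) (hσ : 0 < σ) (ha : 0 < a) (hb : 0 < b)
    (hη : 0 < η) (hμr : r < μ)
    (f : ℝ) (hf : f = a * θ - a * η + (d - γ) * r)
    (A₁ : ℝ) (hA₁ : A₁ = -(μ - r) ^ 2 / (2 * σ ^ 2) - a ^ 2 * η ^ 2 / (2 * b ^ 2))
    (g₁ : ℝ → ℝ) (hg₁ : ∀ t, g₁ t = f * (exp (r * (T - t)) - 1) / r)
    (V : ℝ → ℝ → ℝ)
    (hV : ∀ t x, V t x =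
      if 0 ≤ exp (r * (T - t)) * x + g₁ t
      then (1 / 2) * (exp (r * (T - t)) * x + g₁ t) ^ 2
      else (1 / 2) * exp (2 * A₁ * (T - t)) * (exp (r * (T - t)) * x + g₁ t) ^ 2)
    (t : ℝ) (ht : t ∈ Ioo (0 : ℝ) T)
    (xstar : ℝ) (hxstar : xstar = -(g₁ t) * exp (-(r * (T - t)))) :
    A₁ < 0 ∧
    HasDerivWithinAt (deriv (fun y => V t y)) (exp (2 * r * (T - t))) (Ici xstar) xstar ∧
    HasDerivWithinAt (deriv (fun y => V t y)) (exp ((2 * A₁ + 2 * r) * (T - t)))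
      (Iic xstar) xstar ∧
    exp (2 * r * (T - t)) ≠ exp ((2 * A₁ + 2 * r) * (T - t)) ∧
    ¬ DifferentiableAt ℝ (deriv (fun y => V t y)) xstar := by

  obtain ⟨ht0, htT⟩ := ht
  have hτ : 0 < T - t := by linarith
  have hA₁neg : A₁ < 0 := by
    rw [hA₁]
    have hμr2 : 0 < (μ - r) ^ 2 := pow_pos (by linarith) 2
    have h1 : 0 < (μ - r) ^ 2 / (2 * σ ^ 2) := by positivity
    have h2 : 0 < a ^ 2 * η ^ 2 / (2 * b ^ 2) := by positivity
    rw [neg_div]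
    linarith
  set E : ℝ := exp (r * (T - t)) with hEdef
  set c : ℝ := exp (2 * A₁ * (T - t)) with hcdef
  have hE : 0 < E := exp_pos _
  have hc : 0 < c := exp_pos _
  have hExstar : E * xstar = -(g₁ t) := by
    rw [hxstar, hEdef, exp_neg]
    field_simp
  have hu : ∀ y : ℝ, E * y + g₁ t = E * (y - xstar) := by
    intro y; rw [mul_sub, hExstar]; ring
  have hVeq : ∀ y : ℝ, V t y =
      if 0 ≤ y - xstar then (1 / 2) * (E * (y - xstar)) ^ 2
      else (1 / 2) * c * (E * (y - xstar)) ^ 2 := by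
    intro y
    rw [hV t y, ← hEdef, ← hcdef, hu y]
    have : (0 ≤ E * (y - xstar)) ↔ (0 ≤ y - xstar) := by
      constructor
      · intro h; nlinarith
      · intro h; positivity
    simp [this]
  set D : ℝ → ℝ := fun y =>
      if 0 ≤ y - xstar then E ^ 2 * (y - xstar) else c * E ^ 2 * (y - xstar) with hDdef
  have hderiv : ∀ y : ℝ, HasDerivAt (V t) (D y) y := by
    intro y
    rcases lt_trichotomy y xstar with hy | hy | hy
    · -- left region
      have hDy : D y = c * E ^ 2 * (y - xstar) := by
        rw [hDdef]; simp only; rw [if_neg (by linarith)]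
      have hev : (fun z : ℝ => (1 / 2) * c * (E * (z - xstar)) ^ 2) =ᶠ[nhds y] V t := by
        have : Iio xstar ∈ nhds y := Iio_mem_nhds hy
        filter_upwards [this] with z hz
        rw [hVeq z, if_neg (by simp at hz; linarith)]
      have hd : HasDerivAt (fun z : ℝ => (1 / 2) * c * (E * (z - xstar)) ^ 2)
          (c * E ^ 2 * (y - xstar)) y := by
        have h1 : HasDerivAt (fun z : ℝ => z - xstar) 1 y :=
          (hasDerivAt_id y).sub_const xstar
        have := (((h1.const_mul E).fun_pow 2).const_mul ((1:ℝ)/2 * c))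
        exact this.congr_deriv (by ring)
      rw [hDy]
      exact hd.congr_of_eventuallyEq hev.symm
    · -- at xstar
      subst hy
      have hDy : D y = 0 := by rw [hDdef]; simp
      rw [hDy]
      rw [hasDerivAt_iff_isLittleO]
      have hV0 : V t y = 0 := by rw [hVeq]; simp
      simp only [hV0, smul_zero, sub_zero]
      have hbig : (fun z : ℝ => V t z) =O[nhds y] (fun z => ‖z - y‖ ^ 2) := by
        apply Asymptotics.IsBigO.of_bound ((1/2) * (1 + c) * E ^ 2)
        filter_upwards with z
        rw [hVeq z]
        have hsq : ‖(z - y)‖ ^ 2 = (z - y) ^ 2 := sq_abs _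
        split_ifs with h
        · rw [Real.norm_eq_abs, abs_of_nonneg (by positivity), Real.norm_eq_abs, hsq,
            abs_of_nonneg (sq_nonneg _)]
          have h2 : (E * (z - y)) ^ 2 = E ^ 2 * (z - y) ^ 2 := by ring
          rw [h2]
          nlinarith [mul_nonneg (mul_nonneg hc.le (sq_nonneg E)) (sq_nonneg (z - y))]
        · rw [Real.norm_eq_abs, abs_of_nonneg (by positivity), Real.norm_eq_abs, hsq,
            abs_of_nonneg (sq_nonneg _)]
          have h2 : (E * (z - y)) ^ 2 = E ^ 2 * (z - y) ^ 2 := by ring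
          rw [h2]
          nlinarith [mul_nonneg (sq_nonneg E) (sq_nonneg (z - y))]
      exact hbig.trans_isLittleO (Asymptotics.isLittleO_pow_sub_sub y one_lt_two)
    · -- right region
      have hDy : D y = E ^ 2 * (y - xstar) := by
        rw [hDdef]; simp only; rw [if_pos (by linarith)]
      have hev : (fun z : ℝ => (1 / 2) * (E * (z - xstar)) ^ 2) =ᶠ[nhds y] V t := by
        have : Ioi xstar ∈ nhds y := Ioi_mem_nhds hy
        filter_upwards [this] with z hz
        rw [hVeq z, if_pos (by simp at hz; linarith)]
      have hd : HasDerivAt (fun z : ℝ => (1 / 2) * (E * (z - xstar)) ^ 2)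
          (E ^ 2 * (y - xstar)) y := by
        have h1 : HasDerivAt (fun z : ℝ => z - xstar) 1 y :=
          (hasDerivAt_id y).sub_const xstar
        have := (((h1.const_mul E).fun_pow 2).const_mul ((1:ℝ)/2))
        exact this.congr_deriv (by ring)
      rw [hDy]
      exact hd.congr_of_eventuallyEq hev.symm
  have hDeq : deriv (fun y => V t y) = D := funext fun y => (hderiv y).deriv
  have hE2 : exp (2 * r * (T - t)) = E ^ 2 := by
    rw [hEdef, sq, ← exp_add]; congr 1; ring
  have hcE2 : exp ((2 * A₁ + 2 * r) * (T - t)) = c * E ^ 2 := by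
    rw [hcdef, hEdef, sq, ← exp_add, ← exp_add]; congr 1; ring
  have hright : HasDerivWithinAt (deriv (fun y => V t y)) (exp (2 * r * (T - t)))
      (Ici xstar) xstar := by
    rw [hDeq, hE2]
    have hL : HasDerivWithinAt (fun y : ℝ => E ^ 2 * (y - xstar)) (E ^ 2) (Ici xstar) xstar := by
      have h1 : HasDerivAt (fun z : ℝ => z - xstar) 1 xstar :=
        (hasDerivAt_id xstar).sub_const xstar
      have := (h1.const_mul (E ^ 2)).hasDerivWithinAt (s := Ici xstar)
      simpa using this
    apply hL.congr
    · intro y hy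
      rw [hDdef]; simp only; rw [if_pos (by simp at hy; linarith)]
    · rw [hDdef]; simp
  have hleft : HasDerivWithinAt (deriv (fun y => V t y)) (exp ((2 * A₁ + 2 * r) * (T - t)))
      (Iic xstar) xstar := by
    rw [hDeq, hcE2]
    have hL : HasDerivWithinAt (fun y : ℝ => c * E ^ 2 * (y - xstar)) (c * E ^ 2)
        (Iic xstar) xstar := by
      have h1 : HasDerivAt (fun z : ℝ => z - xstar) 1 xstar :=
        (hasDerivAt_id xstar).sub_const xstar
      have := (h1.const_mul (c * E ^ 2)).hasDerivWithinAt (s := Iic xstar)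
      simpa using this
    apply hL.congr
    · intro y hy
      rw [hDdef]; simp only
      split_ifs with h
      · have : y = xstar := le_antisymm (by simpa using hy) (by linarith)
        simp [this]
      · rfl
    · rw [hDdef]; simp
  have hne : exp (2 * r * (T - t)) ≠ exp ((2 * A₁ + 2 * r) * (T - t)) := by
    intro h
    rw [Real.exp_eq_exp] at h
    nlinarith
  refine ⟨hA₁neg, hright, hleft, hne, ?_⟩
  intro hdiff
  have h1 := (hdiff.hasDerivAt.hasDerivWithinAt (s := Ici xstar)).derivWithin
    (uniqueDiffOn_Ici xstar xstar self_mem_Ici)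
  have h2 := hright.derivWithin (uniqueDiffOn_Ici xstar xstar self_mem_Ici)
  have h3 := (hdiff.hasDerivAt.hasDerivWithinAt (s := Iic xstar)).derivWithin
    (uniqueDiffOn_Iic xstar xstar self_mem_Iic)
  have h4 := hleft.derivWithin (uniqueDiffOn_Iic xstar xstar self_mem_Iic)
  exact hne (by rw [← h2, h1, ← h4, h3])
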